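/- For every subgroup N of the group ⟨g⟩ ≅ C_n of group-like elements of the Taft algebra T_n(q), the linear map λ_N^0 : T_n(q) → k given on the canonical basis by λ_N^0(g^i x^j) = 1 if j = 0 and g^i ∈ N, and λ_N^0(g^i x^j) = 0 otherwise, is a partial action of T_n(q) on k. (Proposition 3.1.5) -/

import Mathlib

open scoped TensorProduct

/-- The Gaussian binomial coefficient `binom(m, ℓ)_q` in a field `k`, defined by
`binom(0,0)_q = 1`, `binom(m,ℓ)_q = 0` for `ℓ < 0` or `ℓ > m`, and the q-Pascal rule
`binom(i,s)_q = binom(i-1,s-1)_q + q^s · binom(i-1,s)_q` for `i ≥ 1`. -/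
def qbinom {k : Type*} [Field k] (q : k) : ℕ → ℤ → k
  | 0, s => if s = 0 then 1 else 0
  | (i + 1), s => qbinom q i (s - 1) + q ^ s.toNat * qbinom q i s

/-- The q-number `(m)_q = 1 + q + ⋯ + q^{m−1}`. -/
def qnum {k : Type*} [Field k] (q : k) (m : ℕ) : k := ∑ l ∈ Finset.range m, q ^ l

/-- The q-factorial `(m)_q! = (m)_q (m−1)_q ⋯ (1)_q`, with `(0)_q! = 1`. -/
def qfact {k : Type*} [Field k] (q : k) : ℕ → k
  | 0 => 1
  | (m + 1) => qnum q (m + 1) * qfact q m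

/-- The linear map `h ↦ Σ λ(h₁) h₂` (Sweedler notation). -/
noncomputable def lCont (k H : Type*) [CommSemiring k] [Semiring H] [Bialgebra k H]
    (lam : H →ₗ[k] k) : H →ₗ[k] H :=
  (TensorProduct.lid k H).toLinearMap ∘ₗ TensorProduct.map lam LinearMap.id ∘ₗ Coalgebra.comul

/-- The linear map `h ↦ Σ h₁ λ(h₂)` (Sweedler notation). -/
noncomputable def rCont (k H : Type*) [CommSemiring k] [Semiring H] [Bialgebra k H]
    (lam : H →ₗ[k] k) : H →ₗ[k] H :=
  (TensorProduct.rid k H).toLinearMap ∘ₗ TensorProduct.map LinearMap.id lam ∘ₗ Coalgebra.comul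

/-- A partial action of a bialgebra `H` on its base field `k`: a linear map `λ : H → k` with
`λ(1) = 1` and `λ(h)λ(y) = Σ λ(h₁)λ(h₂y)` for all `h, y ∈ H`; by linearity the right-hand side
is `λ((Σ λ(h₁) h₂) · y)`. -/
def IsPartialAction (k H : Type*) [CommSemiring k] [Semiring H] [Bialgebra k H]
    (lam : H →ₗ[k] k) : Prop :=
  lam 1 = 1 ∧ ∀ h y : H, lam h * lam y = lam (lCont k H lam h * y)

/-- A symmetric partial action additionally satisfies `λ(h)λ(y) = Σ λ(h₁y)λ(h₂)`, i.e.
`λ(h)λ(y) = λ((Σ h₁ λ(h₂)) · y)`. -/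
def IsSymmPartialAction (k H : Type*) [CommSemiring k] [Semiring H] [Bialgebra k H]
    (lam : H →ₗ[k] k) : Prop :=
  IsPartialAction k H lam ∧ ∀ h y : H, lam h * lam y = lam (rCont k H lam h * y)

/-- A realization of the Taft algebra `T_n(q)`: a Hopf algebra `H` over `k` with generators
`g, x` satisfying `g^n = 1`, `x^n = 0`, `xg = q·gx`, such that `{g^i x^j : 0 ≤ i,j ≤ n−1}` is a
`k`-basis, `g` is group-like and `x` is `(1,g)`-primitive. -/
structure TaftData (k : Type*) [Field k] (n : ℕ) (q : k) (H : Type*)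
    [Ring H] [HopfAlgebra k H] where
  g : H
  x : H
  g_pow_n : g ^ n = 1
  x_pow_n : x ^ n = 0
  x_mul_g : x * g = q • (g * x)
  basis : Module.Basis (Fin n × Fin n) k H
  basis_eq : ∀ i j : Fin n, basis (i, j) = g ^ (i : ℕ) * x ^ (j : ℕ)
  comul_g : Coalgebra.comul (R := k) g = g ⊗ₜ[k] g
  comul_x : Coalgebra.comul (R := k) x = x ⊗ₜ[k] (1 : H) + g ⊗ₜ[k] x
  counit_g : Coalgebra.counit (R := k) g = 1
  counit_x : Coalgebra.counit (R := k) x = 0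

/-- coefficient in the comultiplication formula -/
def tc {k : Type*} [Field k] (q : k) : ℕ → ℕ → k
  | 0, l => if l = 0 then 1 else 0
  | (j+1), l => tc q j l + (if l = 0 then 0 else q ^ (j + 1 - l) * tc q j (l - 1))

lemma tc_gt {k : Type*} [Field k] (q : k) : ∀ j l, j < l → tc q j l = 0 := by
  intro j
  induction j with
  | zero => intro l hl; simp only [tc, ite_eq_right_iff]; omega
  | succ j ih =>
    intro l hl
    have h0 : l ≠ 0 := by omega
    simp [tc, h0, ih l (by omega), ih (l-1) (by omega)]

lemma tc_diag {k : Type*} [Field k] (q : k) : ∀ j, tc q j j = 1 := by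
  intro j
  induction j with
  | zero => simp [tc]
  | succ j ih => simp [tc, tc_gt q j (j+1) (by omega), ih]

section taft
variable {k H : Type*} [Field k] [Ring H] [HopfAlgebra k H]
variable {n : ℕ} {q : k} (T : TaftData k n q H)

lemma x_mul_g_pow (s : ℕ) : T.x * T.g ^ s = q ^ s • (T.g ^ s * T.x) := by
  induction s with
  | zero => simp
  | succ s ih =>
    rw [pow_succ, ← mul_assoc, ih, smul_mul_assoc, mul_assoc, T.x_mul_g,
      mul_smul_comm, ← mul_assoc, smul_smul, ← pow_succ]

lemma x_pow_mul_g_pow (j s : ℕ) : T.x ^ j * T.g ^ s = q ^ (j * s) • (T.g ^ s * T.x ^ j) := by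
  induction j with
  | zero => simp
  | succ j ih =>
    rw [pow_succ, mul_assoc, x_mul_g_pow, mul_smul_comm, ← mul_assoc, ih,
      smul_mul_assoc, smul_smul, mul_assoc, ← pow_succ, ← pow_add]
    ring_nf

lemma x_pow_mul_g (j : ℕ) : T.x ^ j * T.g = q ^ j • (T.g * T.x ^ j) := by
  simpa using x_pow_mul_g_pow T j 1

lemma comul_gx (i j : ℕ) :
    Coalgebra.comul (R := k) (T.g ^ i * T.x ^ j) =
      ∑ l ∈ Finset.range (j+1),
        tc q j l • ((T.g ^ (i+l) * T.x ^ (j-l)) ⊗ₜ[k] (T.g ^ i * T.x ^ l)) := by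
  induction j with
  | zero =>
    simp [Bialgebra.comul_pow, T.comul_g, Algebra.TensorProduct.tmul_pow, tc]
  | succ j ih =>
    have : T.g ^ i * T.x ^ (j+1) = (T.g ^ i * T.x ^ j) * T.x := by
      rw [mul_assoc, ← pow_succ]
    rw [this, Bialgebra.comul_mul, ih, T.comul_x, Finset.sum_mul]
    have lhs_eq : ∀ l ∈ Finset.range (j+1),
        (tc q j l • ((T.g ^ (i+l) * T.x ^ (j-l)) ⊗ₜ[k] (T.g ^ i * T.x ^ l))) *
          (T.x ⊗ₜ[k] (1:H) + T.g ⊗ₜ[k] T.x) =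
        tc q j l • ((T.g ^ (i+l) * T.x ^ (j+1-l)) ⊗ₜ[k] (T.g ^ i * T.x ^ l)) +
        (q ^ (j-l) * tc q j l) • ((T.g ^ (i+(l+1)) * T.x ^ (j-l)) ⊗ₜ[k] (T.g ^ i * T.x ^ (l+1))) := by
      intro l hl
      rw [Finset.mem_range] at hl
      rw [smul_mul_assoc, mul_add, Algebra.TensorProduct.tmul_mul_tmul,
        Algebra.TensorProduct.tmul_mul_tmul, smul_add]
      congr 1
      · rw [mul_one, mul_assoc, ← pow_succ, (by omega : j - l + 1 = j + 1 - l)]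
      · rw [mul_assoc _ _ T.g, x_pow_mul_g T, mul_smul_comm, ← mul_assoc, ← pow_succ,
          mul_assoc _ _ T.x, ← pow_succ, ← TensorProduct.smul_tmul', smul_smul,
          mul_comm (tc q j l), add_assoc]
    rw [Finset.sum_congr rfl lhs_eq, Finset.sum_add_distrib]
    have rhs_split : ∀ l ∈ Finset.range (j+2),
        tc q (j+1) l • ((T.g ^ (i+l) * T.x ^ (j+1-l)) ⊗ₜ[k] (T.g ^ i * T.x ^ l)) =
        tc q j l • ((T.g ^ (i+l) * T.x ^ (j+1-l)) ⊗ₜ[k] (T.g ^ i * T.x ^ l)) +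
        ((if l = 0 then 0 else q ^ (j + 1 - l) * tc q j (l - 1)) •
          ((T.g ^ (i+l) * T.x ^ (j+1-l)) ⊗ₜ[k] (T.g ^ i * T.x ^ l))) := by
      intro l _
      rw [show tc q (j+1) l = tc q j l + (if l = 0 then 0 else q ^ (j + 1 - l) * tc q j (l - 1)) from rfl, add_smul]
    rw [Finset.sum_congr rfl rhs_split, Finset.sum_add_distrib]
    congr 1
    · rw [Finset.sum_range_succ _ (j+1), tc_gt q j (j+1) (by omega), zero_smul, add_zero]
    · rw [Finset.sum_range_succ' _ (j+1)]
      simp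


lemma g_pow_reduce (hn : 0 < n) (m : ℕ) : T.g ^ m = T.g ^ (m % n) := by
  conv_lhs => rw [← Nat.div_add_mod m n]
  rw [pow_add, pow_mul, T.g_pow_n, one_pow, one_mul]

lemma mul_basis (i j s t : ℕ) :
    (T.g ^ i * T.x ^ j) * (T.g ^ s * T.x ^ t) = q ^ (j*s) • (T.g ^ (i+s) * T.x ^ (j+t)) := by
  rw [mul_assoc, ← mul_assoc (T.x ^ j), x_pow_mul_g_pow T j s, smul_mul_assoc,
    mul_smul_comm, mul_assoc, ← pow_add, ← mul_assoc, ← pow_add]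

variable {a : ℕ} {lam : H →ₗ[k] k}

lemma lam_gx (hn : 2 ≤ n) (ha : a ∣ n)
    (hlam : ∀ i j : ℕ, i ≤ n - 1 → j ≤ n - 1 →
      lam (T.g ^ i * T.x ^ j) = if j = 0 ∧ a ∣ i then 1 else 0)
    (m r : ℕ) : lam (T.g ^ m * T.x ^ r) = if r = 0 ∧ a ∣ m then 1 else 0 := by
  by_cases hr : r ≤ n - 1
  · have hm : m % n < n := Nat.mod_lt m (by omega)
    rw [g_pow_reduce T (by omega) m, hlam (m % n) r (by omega) hr]
    have hdvd : a ∣ m % n ↔ a ∣ m := Nat.dvd_mod_iff ha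
    simp [hdvd]
  · have hx : T.x ^ r = 0 := by
      rw [show r = n + (r - n) by omega, pow_add, T.x_pow_n, zero_mul]
    rw [hx, mul_zero, map_zero, if_neg (by omega)]

lemma lCont_basis (hn : 2 ≤ n) (ha : a ∣ n)
    (hlam : ∀ i j : ℕ, i ≤ n - 1 → j ≤ n - 1 →
      lam (T.g ^ i * T.x ^ j) = if j = 0 ∧ a ∣ i then 1 else 0)
    (i j : ℕ) :
    lCont k H lam (T.g ^ i * T.x ^ j)
      = (if a ∣ i + j then (1:k) else 0) • (T.g ^ i * T.x ^ j) := by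
  simp only [lCont, LinearMap.coe_comp, LinearEquiv.coe_coe, Function.comp_apply,
    comul_gx T i j, map_sum, map_smul, TensorProduct.map_tmul, LinearMap.id_coe, id_eq,
    TensorProduct.lid_tmul, lam_gx T hn ha hlam]
  rw [Finset.sum_eq_single j]
  · simp [tc_diag]
  · intro b _ hb
    by_cases hbj : b ≤ j
    · simp [show j - b ≠ 0 by omega]
    · simp [tc_gt q j b (by omega)]
  · intro hj; exact absurd (Finset.self_mem_range_succ j) hj

end taft


/-- Proposition 3.1.5: for every subgroup `N` of the cyclic group `⟨g⟩ ≅ C_n` of group-like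
elements of the Taft algebra `T_n(q)`, the linear map `λ_N^0 : T_n(q) → k` given on the
canonical basis by `λ_N^0(g^i x^j) = 1` if `j = 0` and `g^i ∈ N`, and `0` otherwise, is a
partial action of `T_n(q)` on `k`.  (The subgroups of `⟨g⟩ ≅ C_n` are exactly the subgroups
`N = ⟨g^a⟩` for divisors `a` of `n`, and for `0 ≤ i ≤ n−1` one has `g^i ∈ ⟨g^a⟩ ↔ a ∣ i`.) -/
theorem prop_3_1_5 {k H : Type*} [Field k] [Ring H] [HopfAlgebra k H]
    {n : ℕ} (hn : 2 ≤ n) {q : k} (hq : IsPrimitiveRoot q n)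
    (T : TaftData k n q H) (a : ℕ) (ha : a ∣ n) (lam : H →ₗ[k] k)
    (hlam : ∀ i j : ℕ, i ≤ n - 1 → j ≤ n - 1 →
      lam (T.g ^ i * T.x ^ j) = if j = 0 ∧ a ∣ i then 1 else 0) :
    IsPartialAction k H lam := by
  constructor
  · simpa using hlam 0 0 (Nat.zero_le _) (Nat.zero_le _)
  · have key : ∀ p p' : Fin n × Fin n,
        lam (T.basis p) * lam (T.basis p') = lam (lCont k H lam (T.basis p) * T.basis p') := by
      rintro ⟨i, j⟩ ⟨s, t⟩
      rw [T.basis_eq, T.basis_eq, lam_gx T hn ha hlam, lam_gx T hn ha hlam,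
        lCont_basis T hn ha hlam, smul_mul_assoc, map_smul, mul_basis, map_smul,
        lam_gx T hn ha hlam]
      by_cases hj : (j:ℕ) = 0
      · by_cases ht : (t:ℕ) = 0
        · by_cases hi : a ∣ (i:ℕ)
          · simp [hj, ht, hi, Nat.dvd_add_right hi, smul_eq_mul]
          · simp [hj, ht, hi, smul_eq_mul]
        · simp [ht, hj, (by omega : ¬((j:ℕ)+(t:ℕ) = 0)), smul_eq_mul]
      · simp [hj, (by omega : ¬((j:ℕ)+(t:ℕ) = 0)), smul_eq_mul]
    have hB : ((LinearMap.mul k k).compl₁₂ lam lam : H →ₗ[k] H →ₗ[k] k)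
        = ((LinearMap.mul k H).compl₁₂ (lCont k H lam) LinearMap.id).compr₂ lam := by
      apply LinearMap.ext_basis T.basis T.basis
      intro p p'
      simpa using key p p'
    intro h y
    simpa using DFunLike.congr_fun (DFunLike.congr_fun hB h) y
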